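/- Let X be a real random variable taking values in a finite set S ⊂ [0, ∞), and suppose P(X > 2) > 0. Then |E[(1 − X)^k]| → ∞ as k → ∞. -/

import Mathlib

open MeasureTheory Filter

/-- **Divergence of signed power moments.**
If `X` is a random variable taking values in a finite set `S ⊆ [0, ∞)` and
`P(X > 2) > 0`, then `|E[(1 − X)^k]| → ∞` as `k → ∞`. -/
theorem stmt14 {Ω : Type*} [MeasurableSpace Ω] (μ : Measure Ω) [IsProbabilityMeasure μ]
    (X : Ω → ℝ) (hX : Measurable X) (S : Finset ℝ)
    (hXS : ∀ ω, X ω ∈ S) (hS : ∀ y ∈ S, 0 ≤ y)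
    (hP : 0 < μ {ω | 2 < X ω}) :
    Tendsto (fun k : ℕ => |∫ ω, (1 - X ω) ^ k ∂μ|) atTop atTop := by
  classical
  set p : ℝ → ℝ := fun y => (μ (X ⁻¹' {y})).toReal with hp
  have hmeas : ∀ y : ℝ, MeasurableSet (X ⁻¹' {y}) := fun y => hX (measurableSet_singleton y)
  have hpnn : ∀ y : ℝ, 0 ≤ p y := fun y => ENNReal.toReal_nonneg
  -- integral of g ∘ X as a finite sum
  have key : ∀ g : ℝ → ℝ, ∫ ω, g (X ω) ∂μ = ∑ y ∈ S, p y * g y := by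
    intro g
    have hfun : ∀ ω, g (X ω) = ∑ y ∈ S, Set.indicator (X ⁻¹' {y}) (fun _ => g y) ω := by
      intro ω
      rw [Finset.sum_eq_single (X ω)]
      · simp [Set.indicator_apply]
      · intro y _ hne
        exact Set.indicator_of_notMem (fun h : X ω = y => hne h.symm) _
      · intro h; exact absurd (hXS ω) h
    calc ∫ ω, g (X ω) ∂μ
        = ∫ ω, ∑ y ∈ S, Set.indicator (X ⁻¹' {y}) (fun _ => g y) ω ∂μ := by
          simp_rw [hfun]
      _ = ∑ y ∈ S, ∫ ω, Set.indicator (X ⁻¹' {y}) (fun _ => g y) ω ∂μ := by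
          apply integral_finset_sum
          intro y _
          exact (integrable_const (g y)).indicator (hmeas y)
      _ = ∑ y ∈ S, p y * g y := by
          refine Finset.sum_congr rfl fun y _ => ?_
          rw [integral_indicator_const _ (hmeas y)]
          simp [hp, mul_comm, Measure.real_def]
  -- total mass
  have psum : ∑ y ∈ S, p y = 1 := by
    have h := key (fun _ => 1)
    simp at h
    linarith [h]
  -- find y0 > 2 with positive mass
  set T : Finset ℝ := S.filter (fun y => 2 < y) with hT
  have hsub : {ω | 2 < X ω} ⊆ ⋃ y ∈ T, X ⁻¹' {y} := by
    intro ω hω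
    refine Set.mem_biUnion ?_ rfl
    exact Finset.mem_filter.2 ⟨hXS ω, hω⟩
  have : ∃ y0 ∈ T, 0 < μ (X ⁻¹' {y0}) := by
    by_contra h
    push_neg at h
    have hz : ∀ y ∈ T, μ (X ⁻¹' {y}) = 0 := fun y hy => le_antisymm (h y hy) zero_le
    have : μ {ω | 2 < X ω} ≤ ∑ y ∈ T, μ (X ⁻¹' {y}) :=
      le_trans (measure_mono hsub) (measure_biUnion_finset_le T _)
    rw [Finset.sum_eq_zero hz] at this
    exact absurd (le_antisymm this zero_le) hP.ne'
  obtain ⟨y0, hy0T, hy0pos⟩ := this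
  have hy0S : y0 ∈ S := (Finset.mem_filter.1 hy0T).1
  have hy02 : 2 < y0 := (Finset.mem_filter.1 hy0T).2
  have hp0 : 0 < p y0 := ENNReal.toReal_pos hy0pos.ne' (measure_ne_top μ _)
  -- lower bound on |E_k|
  have hbound : ∀ k : ℕ, p y0 * (y0 - 1) ^ k - 1 ≤ |∫ ω, (1 - X ω) ^ k ∂μ| := by
    intro k
    have hk := key (fun y => (1 - y) ^ k)
    rw [hk]
    rw [← Finset.sum_filter_add_sum_filter_not S (fun y => 2 < y)]
    set a : ℝ := ∑ y ∈ S.filter (fun y => 2 < y), p y * (1 - y) ^ k with ha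
    set b : ℝ := ∑ y ∈ S.filter (fun y => ¬ 2 < y), p y * (1 - y) ^ k with hb
    have habs : |a| - |b| ≤ |a + b| := by
      have h := abs_add_le (a + b) (-b)
      simp at h
      have : |(-b)| = |b| := abs_neg b
      calc |a| - |b| = |a + b + -b| - |b| := by ring_nf
        _ ≤ |a + b| + |(-b)| - |b| := by linarith [abs_add_le (a + b) (-b)]
        _ = |a + b| := by rw [abs_neg]; ring
    have hA : p y0 * (y0 - 1) ^ k ≤ |a| := by
      have : a = (-1 : ℝ) ^ k * ∑ y ∈ S.filter (fun y => 2 < y), p y * (y - 1) ^ k := by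
        rw [Finset.mul_sum]
        refine Finset.sum_congr rfl fun y hy => ?_
        have : (1 - y) ^ k = (-1 : ℝ) ^ k * (y - 1) ^ k := by
          rw [← mul_pow]; ring_nf
        rw [this]; ring
      rw [this, abs_mul, abs_pow, abs_neg, abs_one, one_pow, one_mul]
      have hterm : ∀ y ∈ S.filter (fun y => 2 < y), 0 ≤ p y * (y - 1) ^ k := by
        intro y hy
        have : (2 : ℝ) < y := (Finset.mem_filter.1 hy).2
        exact mul_nonneg (hpnn y) (pow_nonneg (by linarith) k)
      have hsing : p y0 * (y0 - 1) ^ k ≤ ∑ y ∈ S.filter (fun y => 2 < y), p y * (y - 1) ^ k :=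
        Finset.single_le_sum hterm hy0T
      calc p y0 * (y0 - 1) ^ k ≤ ∑ y ∈ S.filter (fun y => 2 < y), p y * (y - 1) ^ k := hsing
        _ ≤ |∑ y ∈ S.filter (fun y => 2 < y), p y * (y - 1) ^ k| := le_abs_self _
    have hB : |b| ≤ 1 := by
      calc |b| ≤ ∑ y ∈ S.filter (fun y => ¬ 2 < y), |p y * (1 - y) ^ k| :=
            Finset.abs_sum_le_sum_abs _ _
        _ ≤ ∑ y ∈ S.filter (fun y => ¬ 2 < y), p y := by
            refine Finset.sum_le_sum fun y hy => ?_
            have hyS : y ∈ S := (Finset.mem_filter.1 hy).1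
            have hy2 : ¬ (2 : ℝ) < y := (Finset.mem_filter.1 hy).2
            have hy0' : (0 : ℝ) ≤ y := hS y hyS
            have h1 : |1 - y| ≤ 1 := by
              rw [abs_le]; constructor <;> nlinarith
            rw [abs_mul, abs_pow, abs_of_nonneg (hpnn y)]
            have : |1 - y| ^ k ≤ 1 := pow_le_one₀ (abs_nonneg _) h1
            nlinarith [hpnn y]
        _ ≤ ∑ y ∈ S, p y := Finset.sum_le_sum_of_subset_of_nonneg
              (Finset.filter_subset _ _) (fun y hy _ => hpnn y)
        _ = 1 := psum
    linarith
  -- now tendsto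
  have hlim : Tendsto (fun k : ℕ => p y0 * (y0 - 1) ^ k - 1) atTop atTop := by
    have h1 : (1 : ℝ) < y0 - 1 := by linarith
    have := (tendsto_pow_atTop_atTop_of_one_lt h1).const_mul_atTop hp0
    exact tendsto_atTop_add_const_right atTop (-1) this
  exact tendsto_atTop_mono hbound hlim
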